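/- Let X, Y ∈ FT_n(M) with both X and Y nilpotent (strictly upper triangular). Then v_M(XY) ≥ min(ṽ_M(X), ṽ_M(Y)), where ṽ_M omits the (1,n) entry from the defining minimum. -/
import Mathlib


/-- The set `FT_n(M)`: upper triangular matrices whose diagonal entries all equal a common
element of the prime field `𝔽_p`. -/
def IsFT (p : ℕ) {n : ℕ} {M : Type*} [Field M] (X : Matrix (Fin n) (Fin n) M) : Prop :=
  (∀ i j : Fin n, j < i → X i j = 0) ∧ ∃ c : ZMod p, ∀ i : Fin n, X i i = ZMod.cast c

/-- The matrix valuation `v_M(X) = min_{i<j} v_M(x_{i,j})/(j-i)`, with values in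
`ℚ ∪ {+∞}`. -/
noncomputable def vmat {n : ℕ} {M : Type*} [Field M] (v : AddValuation M (WithTop ℤ))
    (X : Matrix (Fin n) (Fin n) M) : WithTop ℚ :=
  Finset.univ.inf fun ij : Fin n × Fin n =>
    if ij.1 < ij.2 then
      WithTop.map (fun z : ℤ => (z : ℚ) / ((ij.2 : ℚ) - (ij.1 : ℚ))) (v (X ij.1 ij.2))
    else ⊤

/-- The matrix valuation `ṽ_M(X)`: same as `v_M(X)` but omitting the `(1,n)` entry. -/
noncomputable def vtil {n : ℕ} {M : Type*} [Field M] (v : AddValuation M (WithTop ℤ))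
    (X : Matrix (Fin n) (Fin n) M) : WithTop ℚ :=
  Finset.univ.inf fun ij : Fin n × Fin n =>
    if ij.1 < ij.2 ∧ ¬((ij.1 : ℕ) = 0 ∧ (ij.2 : ℕ) = n - 1) then
      WithTop.map (fun z : ℤ => (z : ℚ) / ((ij.2 : ℚ) - (ij.1 : ℚ))) (v (X ij.1 ij.2))
    else ⊤

/-- Monotonicity of dividing by a positive rational on `WithTop ℤ → WithTop ℚ`. -/
lemma map_div_mono {c : ℚ} (hc : 0 < c) {a b : WithTop ℤ} (hab : a ≤ b) :
    WithTop.map (fun z : ℤ => (z : ℚ) / c) a ≤ WithTop.map (fun z : ℤ => (z : ℚ) / c) b := by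
  cases b with
  | top => simp
  | coe zb =>
    cases a with
    | top => simp at hab
    | coe za =>
      rw [WithTop.map_coe, WithTop.map_coe, WithTop.coe_le_coe]
      rw [WithTop.coe_le_coe] at hab
      exact div_le_div_of_nonneg_right (by exact_mod_cast hab) hc.le

/-- Combining two divided bounds. -/
lemma map_div_add {c d : ℚ} (hc : 0 < c) (hd : 0 < d) {a b : WithTop ℤ} {t : WithTop ℚ}
    (ha : t ≤ WithTop.map (fun z : ℤ => (z : ℚ) / c) a)
    (hb : t ≤ WithTop.map (fun z : ℤ => (z : ℚ) / d) b) :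
    t ≤ WithTop.map (fun z : ℤ => (z : ℚ) / (c + d)) (a + b) := by
  cases a with
  | top => simp [WithTop.top_add]
  | coe za =>
    cases b with
    | top => simp [WithTop.add_top]
    | coe zb =>
      rw [WithTop.map_coe] at ha hb
      cases t with
      | top => exact absurd ha (by simp)
      | coe s =>
        rw [WithTop.coe_le_coe] at ha hb
        rw [← WithTop.coe_add, WithTop.map_coe, WithTop.coe_le_coe]
        push_cast
        rw [le_div_iff₀ (by linarith)]
        rw [le_div_iff₀ hc] at ha
        rw [le_div_iff₀ hd] at hb
        push_cast
        nlinarith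

/-- For `X, Y ∈ FT_n(M)` both nilpotent (strictly upper triangular),
`v_M(XY) ≥ min(ṽ_M(X), ṽ_M(Y))`. -/
theorem vmat_mul_nilpotent_nilpotent {p n : ℕ} (hp : p.Prime) {M : Type*} [Field M]
    [CharP M p] (v : AddValuation M (WithTop ℤ)) (X Y : Matrix (Fin n) (Fin n) M)
    (hX : IsFT p X) (hY : IsFT p Y)
    (hXnil : ∀ i j : Fin n, j ≤ i → X i j = 0) (hYnil : ∀ i j : Fin n, j ≤ i → Y i j = 0) :
    min (vtil v X) (vtil v Y) ≤ vmat v (X * Y) := by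
  set m := min (vtil v X) (vtil v Y) with hm
  rw [vmat]
  apply Finset.le_inf
  rintro ⟨i, j⟩ -
  dsimp only
  split_ifs with hij
  · -- per-term bound
    have key : ∀ k : Fin n,
        m ≤ WithTop.map (fun z : ℤ => (z : ℚ) / ((j : ℚ) - (i : ℚ))) (v (X i k * Y k j)) := by
      intro k
      by_cases hik : i < k
      · by_cases hkj : k < j
        · -- both factors counted in vtil
          have hX1 : vtil v X ≤
              WithTop.map (fun z : ℤ => (z : ℚ) / ((k : ℚ) - (i : ℚ))) (v (X i k)) := by
            have := Finset.inf_le (f := fun ij : Fin n × Fin n =>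
              if ij.1 < ij.2 ∧ ¬((ij.1 : ℕ) = 0 ∧ (ij.2 : ℕ) = n - 1) then
                WithTop.map (fun z : ℤ => (z : ℚ) / ((ij.2 : ℚ) - (ij.1 : ℚ))) (v (X ij.1 ij.2))
              else ⊤) (Finset.mem_univ (i, k))
            rw [vtil]
            refine le_trans this ?_
            have hcond : i < k ∧ ¬((i : ℕ) = 0 ∧ (k : ℕ) = n - 1) := by
              refine ⟨hik, ?_⟩
              rintro ⟨-, hk⟩
              have := j.isLt
              have : (k : ℕ) < (j : ℕ) := hkj
              omega
            simp only [if_pos hcond]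
            exact le_rfl
          have hY1 : vtil v Y ≤
              WithTop.map (fun z : ℤ => (z : ℚ) / ((j : ℚ) - (k : ℚ))) (v (Y k j)) := by
            have := Finset.inf_le (f := fun ij : Fin n × Fin n =>
              if ij.1 < ij.2 ∧ ¬((ij.1 : ℕ) = 0 ∧ (ij.2 : ℕ) = n - 1) then
                WithTop.map (fun z : ℤ => (z : ℚ) / ((ij.2 : ℚ) - (ij.1 : ℚ))) (v (Y ij.1 ij.2))
              else ⊤) (Finset.mem_univ (k, j))
            rw [vtil]
            refine le_trans this ?_
            have hcond : k < j ∧ ¬((k : ℕ) = 0 ∧ (j : ℕ) = n - 1) := by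
              refine ⟨hkj, ?_⟩
              rintro ⟨hk, -⟩
              have : (i : ℕ) < (k : ℕ) := hik
              omega
            simp only [if_pos hcond]
            exact le_rfl
          have hik' : (i : ℚ) < (k : ℚ) := by exact_mod_cast (show (i:ℕ) < (k:ℕ) from hik)
          have hkj' : (k : ℚ) < (j : ℚ) := by exact_mod_cast (show (k:ℕ) < (j:ℕ) from hkj)
          have := map_div_add (c := (k : ℚ) - (i : ℚ)) (d := (j : ℚ) - (k : ℚ))
            (by linarith) (by linarith)
            (le_trans (min_le_left _ _) hX1) (le_trans (min_le_right _ _) hY1)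
          rw [v.map_mul]
          have heq : ((k : ℚ) - (i : ℚ)) + ((j : ℚ) - (k : ℚ)) = (j : ℚ) - (i : ℚ) := by ring
          rwa [heq] at this
        · have : Y k j = 0 := hYnil k j (not_lt.mp hkj)
          simp [this, v.map_zero]
      · have : X i k = 0 := hXnil i k (not_lt.mp hik)
        simp [this, v.map_zero]
    -- combine over the sum
    have hne : (Finset.univ : Finset (Fin n)).Nonempty := ⟨i, Finset.mem_univ i⟩
    obtain ⟨k0, -, hk0⟩ := Finset.exists_mem_eq_inf Finset.univ hne
      (fun k => v (X i k * Y k j))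
    have hsum : v ((X * Y) i j) ≥ Finset.univ.inf (fun k => v (X i k * Y k j)) := by
      rw [Matrix.mul_apply]
      exact v.map_le_sum fun k _ => Finset.inf_le (Finset.mem_univ k)
    have hij' : (i : ℚ) < (j : ℚ) := by exact_mod_cast (show (i:ℕ) < (j:ℕ) from hij)
    calc m ≤ WithTop.map (fun z : ℤ => (z : ℚ) / ((j : ℚ) - (i : ℚ))) (v (X i k0 * Y k0 j)) :=
          key k0
      _ ≤ WithTop.map (fun z : ℤ => (z : ℚ) / ((j : ℚ) - (i : ℚ))) (v ((X * Y) i j)) := by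
          apply map_div_mono (by linarith)
          rw [← hk0]; exact hsum
  · exact le_top
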